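/- Let K be a valued field of characteristic zero whose valuation ring K° is a Henselian local ring, and let f be a polynomial over K of degree d in one variable. Then there exist a positive integer k and a finite subset C ⊆ K such that for every y ∈ K there is some c ∈ C for which, writing f(Y) = Σ_{i=0}^d b_{i,c}·(Y − c)^i (the Taylor expansion of f at c), one has v(f(y)) ≥ v(k)·v(b_{i,c})·v(y − c)^i for all 0 ≤ i ≤ d (i.e., ord f(y) ≤ min_{0 ≤ i ≤ d} ord(k·b_{i,c}·(y − c)^i)). -/

import Mathlib

open Polynomial

section Helpers
variable {K : Type*} [Field K] {Γ₀ : Type*} [LinearOrderedCommGroupWithZero Γ₀]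
  (v : Valuation K Γ₀)



lemma v_nat_le_one (n : ℕ) : v (n : K) ≤ 1 := by
  induction n with
  | zero => simp
  | succ n ih =>
    push_cast
    exact le_trans (v.map_add _ _) (max_le ih (le_of_eq v.map_one))

lemma taylor_coeff_sum (G : K[X]) (s : K) (j : ℕ) :
    (taylor s G).coeff j
      = ∑ m ∈ G.support, (m.choose j : K) * G.coeff m * s ^ (m - j) := by
  rw [taylor_coeff, hasseDeriv_apply, Polynomial.sum_def, Polynomial.eval_finset_sum]
  refine Finset.sum_congr rfl fun m hm => ?_
  rw [eval_monomial]

/-- If `c` is a good center for `g` at `y` and `z` is at least as close to `y` (and to `c`),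
then `z` is also a good center for `g` at `y`. -/
lemma shift_center (g : K[X]) (k : ℕ) (c z y : K)
    (hk : ∀ m ≤ g.natDegree,
      v (k : K) * v ((taylor c g).coeff m) * v (y - c) ^ m ≤ v (g.eval y))
    (hzc : v (z - c) ≤ v (y - c)) (hzy : v (y - z) ≤ v (y - c)) (j : ℕ) :
    v (k : K) * v ((taylor z g).coeff j) * v (y - z) ^ j ≤ v (g.eval y) := by
  have h1 : taylor z g = taylor (z - c) (taylor c g) := by
    rw [taylor_taylor, sub_add_cancel]
  have h2 : v (k : K) * v ((taylor z g).coeff j) * v (y - z) ^ j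
      = v (((taylor z g).coeff j) * ((k : K) * (y - z) ^ j)) := by
    rw [map_mul, map_mul, map_pow]
    simp only [mul_comm, mul_left_comm, mul_assoc]
  rw [h2, h1, taylor_coeff_sum, Finset.sum_mul]
  apply v.map_sum_le
  intro m hm
  rcases lt_or_ge m j with hmj | hjm
  · simp [Nat.choose_eq_zero_of_lt hmj]
  · have hmdeg : m ≤ g.natDegree := by
      have := le_natDegree_of_mem_supp m hm
      rwa [natDegree_taylor] at this
    have : v ((m.choose j : K) * (taylor c g).coeff m * (z - c) ^ (m - j)
        * ((k : K) * (y - z) ^ j))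
        = v ((m.choose j : K)) * (v (k : K) * v ((taylor c g).coeff m)
            * (v (z - c) ^ (m - j) * v (y - z) ^ j)) := by
      rw [map_mul, map_mul, map_mul, map_mul, map_pow, map_pow]
      simp only [mul_comm, mul_left_comm, mul_assoc]
    rw [this]
    calc v ((m.choose j : K)) * (v (k : K) * v ((taylor c g).coeff m)
            * (v (z - c) ^ (m - j) * v (y - z) ^ j))
        ≤ 1 * (v (k : K) * v ((taylor c g).coeff m)
            * (v (y - c) ^ (m - j) * v (y - c) ^ j)) := by
          refine mul_le_mul' (v_nat_le_one v _) (mul_le_mul' le_rfl ?_)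
          exact mul_le_mul' (pow_le_pow_left' hzc _) (pow_le_pow_left' hzy _)
      _ = v (k : K) * v ((taylor c g).coeff m) * v (y - c) ^ m := by
          rw [one_mul, ← pow_add, Nat.sub_add_cancel hjm]
      _ ≤ v (g.eval y) := hk m hmdeg


lemma taylor_derivative' (f : K[X]) (c : K) :
    derivative (taylor c f) = taylor c (derivative f) := by
  simp only [taylor_apply, derivative_comp, derivative_add, derivative_X, derivative_C,
    add_zero, one_mul]

set_option maxHeartbeats 2000000 in
theorem cell_aux [CharZero K] (hhens : HenselianLocalRing v.integer) :
    ∀ d : ℕ, ∀ f : K[X], f.natDegree = d →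
      ∃ k : ℕ, 0 < k ∧ ∃ C : Finset K, ∀ y : K, ∃ c ∈ C,
        ∀ i ≤ d, v (k : K) * v ((taylor c f).coeff i) * v (y - c) ^ i ≤ v (f.eval y) := by
  intro d
  induction d using Nat.strong_induction_on with
  | _ d IH =>
  intro f hd
  classical
  rcases Nat.eq_zero_or_pos d with hd0 | hdpos
  · -- constant case
    subst hd0
    refine ⟨1, one_pos, {0}, fun y => ⟨0, Finset.mem_singleton_self 0, fun i hi => ?_⟩⟩
    interval_cases i
    have hf : f = C (f.coeff 0) := eq_C_of_natDegree_eq_zero hd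
    rw [hf]
    simp
  by_cases hroot : ∃ z : K, f.eval z = 0
  · -- root case
    obtain ⟨z, hz⟩ := hroot
    obtain ⟨g, hfg⟩ := (dvd_iff_isRoot.mpr hz)
    have hf0 : f ≠ 0 := fun h => by simp [h] at hd; omega
    have hg0 : g ≠ 0 := fun h => by rw [h, mul_zero] at hfg; exact hf0 hfg
    have hgdeg : g.natDegree = d - 1 := by
      have h1 : f.natDegree = (X - C z).natDegree + g.natDegree := by
        rw [hfg, natDegree_mul (X_sub_C_ne_zero z) hg0]
      rw [natDegree_X_sub_C] at h1
      omega
    obtain ⟨k, hkpos, Cg, hCg⟩ := IH (d - 1) (by omega) g hgdeg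
    refine ⟨k, hkpos, insert z Cg, fun y => ?_⟩
    obtain ⟨c', hc'mem, hc'⟩ := hCg y
    have hc'' : ∀ i, v (k : K) * v ((taylor c' g).coeff i) * v (y - c') ^ i ≤ v (g.eval y) := by
      intro i
      rcases le_or_gt i (d - 1) with h | h
      · exact hc' i h
      · have : (taylor c' g).coeff i = 0 := by
          apply coeff_eq_zero_of_natDegree_lt
          rwa [natDegree_taylor, hgdeg]
        rw [this]
        simp [zero_le']
    have hkg : ∀ m ≤ g.natDegree,
        v (k : K) * v ((taylor c' g).coeff m) * v (y - c') ^ m ≤ v (g.eval y) :=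
      fun m _ => hc'' m
    have vfy : v (f.eval y) = v (y - z) * v (g.eval y) := by
      rw [hfg, eval_mul, map_mul, eval_sub, eval_X, eval_C]
    rcases le_or_gt (v (y - c')) (v (y - z)) with hA | hB
    · -- use c'
      refine ⟨c', Finset.mem_insert_of_mem hc'mem, fun i _ => ?_⟩
      have hvc'z : v (c' - z) ≤ v (y - z) := by
        have h1 : c' - z = (c' - y) + (y - z) := by ring
        rw [h1]
        refine le_trans (v.map_add _ _) (max_le ?_ le_rfl)
        rwa [v.map_sub_swap]
      have htay : taylor c' f = (X + C (c' - z)) * taylor c' g := by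
        have h0 : taylor c' (X - C z) = X + C (c' - z) := by
          rw [map_sub (taylor c'), taylor_X, taylor_C, C_sub]
          ring
        rw [hfg, taylor_mul, h0]
      rw [vfy]
      cases i with
      | zero =>
        have hco : (taylor c' f).coeff 0 = (c' - z) * (taylor c' g).coeff 0 := by
          rw [htay, mul_coeff_zero, coeff_add, coeff_X_zero, coeff_C_zero, zero_add]
        rw [hco, pow_zero, mul_one, map_mul]
        calc v (k : K) * (v (c' - z) * v ((taylor c' g).coeff 0))
            = v (c' - z) * (v (k : K) * v ((taylor c' g).coeff 0) * v (y - c') ^ 0) := by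
              rw [pow_zero, mul_one]; simp only [mul_comm, mul_left_comm]
          _ ≤ v (y - z) * v (g.eval y) := mul_le_mul' hvc'z (hc'' 0)
      | succ n =>
        have hco : (taylor c' f).coeff (n + 1)
            = (taylor c' g).coeff n + (c' - z) * (taylor c' g).coeff (n + 1) := by
          rw [htay, add_mul, coeff_add, coeff_X_mul, coeff_C_mul]
        rw [hco]
        have hle := v.map_add ((taylor c' g).coeff n) ((c' - z) * (taylor c' g).coeff (n + 1))
        rcases le_max_iff.mp hle with h | h
        · calc v (k : K) * v ((taylor c' g).coeff n + (c' - z) * (taylor c' g).coeff (n + 1))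
                * v (y - c') ^ (n + 1)
              ≤ v (k : K) * v ((taylor c' g).coeff n) * v (y - c') ^ (n + 1) := by
                exact mul_le_mul' (mul_le_mul' le_rfl h) le_rfl
            _ = v (k : K) * v ((taylor c' g).coeff n) * v (y - c') ^ n * v (y - c') := by
                rw [pow_succ, ← mul_assoc]
            _ ≤ v (g.eval y) * v (y - z) := mul_le_mul' (hc'' n) hA
            _ = v (y - z) * v (g.eval y) := mul_comm _ _
        · rw [map_mul] at h
          calc v (k : K) * v ((taylor c' g).coeff n + (c' - z) * (taylor c' g).coeff (n + 1))
                * v (y - c') ^ (n + 1)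
              ≤ v (k : K) * (v (c' - z) * v ((taylor c' g).coeff (n + 1)))
                  * v (y - c') ^ (n + 1) := by
                exact mul_le_mul' (mul_le_mul' le_rfl h) le_rfl
            _ = v (c' - z) * (v (k : K) * v ((taylor c' g).coeff (n + 1))
                  * v (y - c') ^ (n + 1)) := by
                simp only [mul_comm, mul_left_comm, mul_assoc]
            _ ≤ v (y - z) * v (g.eval y) := mul_le_mul' hvc'z (hc'' (n + 1))
    · -- use z
      refine ⟨z, Finset.mem_insert_self z Cg, fun i _ => ?_⟩
      have htay : taylor z f = X * taylor z g := by
        rw [hfg, taylor_mul]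
        congr 1
        rw [map_sub (taylor z), taylor_X, taylor_C]
        ring
      rw [vfy]
      cases i with
      | zero =>
        have hco : (taylor z f).coeff 0 = 0 := by
          rw [htay, mul_coeff_zero, coeff_X_zero, zero_mul]
        rw [hco]
        simp [zero_le']
      | succ n =>
        have hco : (taylor z f).coeff (n + 1) = (taylor z g).coeff n := by
          rw [htay, coeff_X_mul]
        rw [hco]
        have hshift := shift_center v g k c' z y hkg
          (by
            have h1 : z - c' = (z - y) + (y - c') := by ring
            rw [h1]
            refine le_trans (v.map_add _ _) (max_le ?_ le_rfl)
            rw [v.map_sub_swap]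
            exact le_of_lt hB)
          (le_of_lt hB) n
        calc v (k : K) * v ((taylor z g).coeff n) * v (y - z) ^ (n + 1)
            = v (k : K) * v ((taylor z g).coeff n) * v (y - z) ^ n * v (y - z) := by
              rw [pow_succ, ← mul_assoc]
          _ ≤ v (g.eval y) * v (y - z) := mul_le_mul' hshift le_rfl
          _ = v (y - z) * v (g.eval y) := mul_comm _ _
  · -- no root case
    push_neg at hroot
    obtain ⟨d', rfl⟩ : ∃ d', d = d' + 1 := ⟨d - 1, by omega⟩
    have hf0 : f ≠ 0 := fun h => by simp [h] at hd
    have hfderiv : (derivative f).natDegree = d' := by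
      have hle : (derivative f).natDegree ≤ d' := by
        have := natDegree_derivative_le f
        omega
      have hne : (derivative f).coeff d' ≠ 0 := by
        rw [coeff_derivative]
        apply mul_ne_zero
        · have : f.coeff (d' + 1) = f.leadingCoeff := by rw [leadingCoeff, hd]
          rw [this]
          exact leadingCoeff_ne_zero.mpr hf0
        · exact Nat.cast_add_one_ne_zero d'
      exact le_antisymm hle (le_natDegree_of_ne_zero hne)
    obtain ⟨k', hk'pos, C', hC'⟩ := IH d' (by omega) (derivative f) hfderiv
    set K₁ : ℕ := k' * (d' + 1).factorial with hK₁def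
    have hK₁pos : 0 < K₁ := Nat.mul_pos hk'pos (Nat.factorial_pos _)
    have hvK₁le1 : v ((K₁ : ℕ) : K) ≤ 1 := v_nat_le_one v _
    have hvK₁ne : v ((K₁ : ℕ) : K) ≠ 0 := by
      rw [Valuation.ne_zero_iff]
      exact_mod_cast hK₁pos.ne'
    refine ⟨K₁ ^ 4, pow_pos hK₁pos 4, C', fun y => ?_⟩
    obtain ⟨c, hcmem, hc⟩ := hC' y
    have IH' : ∀ n, n + 1 ≤ d' + 1 →
        v ((K₁ : ℕ) : K) * v ((taylor c f).coeff (n + 1)) * v (y - c) ^ n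
          ≤ v ((derivative f).eval y) := by
      intro n hn
      have h1 := hc n (by omega)
      have h2 : (taylor c (derivative f)).coeff n
          = (taylor c f).coeff (n + 1) * ((n : K) + 1) := by
        rw [← taylor_derivative', coeff_derivative]
      rw [h2, map_mul] at h1
      have hdvd : (n + 1) ∣ (d' + 1).factorial :=
        Nat.dvd_factorial (Nat.succ_pos n) (by omega)
      obtain ⟨q, hq⟩ := hdvd
      have key : v ((K₁ : ℕ) : K) ≤ v ((k' : ℕ) : K) * v ((n : K) + 1) := by
        have hcast : ((K₁ : ℕ) : K) = ((k' : ℕ) : K) * ((n : K) + 1) * ((q : ℕ) : K) := by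
          rw [hK₁def, hq]
          push_cast
          ring
        rw [hcast, map_mul, map_mul]
        calc v ((k' : ℕ) : K) * v ((n : K) + 1) * v ((q : ℕ) : K)
            ≤ v ((k' : ℕ) : K) * v ((n : K) + 1) * 1 :=
              mul_le_mul' le_rfl (v_nat_le_one v q)
          _ = v ((k' : ℕ) : K) * v ((n : K) + 1) := mul_one _
      calc v ((K₁ : ℕ) : K) * v ((taylor c f).coeff (n + 1)) * v (y - c) ^ n
          ≤ v ((k' : ℕ) : K) * v ((n : K) + 1) * v ((taylor c f).coeff (n + 1))
              * v (y - c) ^ n := mul_le_mul' (mul_le_mul' key le_rfl) le_rfl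
        _ = v ((k' : ℕ) : K) * (v ((taylor c f).coeff (n + 1)) * v ((n : K) + 1))
              * v (y - c) ^ n := by simp only [mul_comm, mul_left_comm, mul_assoc]
        _ ≤ v ((derivative f).eval y) := h1
    by_cases hcase : v ((K₁ : ℕ) : K) * v ((derivative f).eval y) * v (y - c) ≤ v (f.eval y)
    · -- no deep cancellation at c : c is a good center
      refine ⟨c, hcmem, fun i hi => ?_⟩
      have H2 : ∀ n, n + 1 ≤ d' + 1 →
          v ((K₁ : ℕ) : K) ^ 2 * v ((taylor c f).coeff (n + 1)) * v (y - c) ^ (n + 1)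
            ≤ v (f.eval y) := by
        intro n hn
        calc v ((K₁ : ℕ) : K) ^ 2 * v ((taylor c f).coeff (n + 1)) * v (y - c) ^ (n + 1)
            = (v ((K₁ : ℕ) : K) * v ((taylor c f).coeff (n + 1)) * v (y - c) ^ n)
                * (v ((K₁ : ℕ) : K) * v (y - c)) := by
              rw [sq, pow_succ]
              simp only [mul_comm, mul_left_comm, mul_assoc]
          _ ≤ v ((derivative f).eval y) * (v ((K₁ : ℕ) : K) * v (y - c)) :=
              mul_le_mul' (IH' n hn) le_rfl
          _ = v ((K₁ : ℕ) : K) * v ((derivative f).eval y) * v (y - c) := by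
              simp only [mul_comm, mul_left_comm, mul_assoc]
          _ ≤ v (f.eval y) := hcase
      have hcast4 : (((K₁ ^ 4 : ℕ) : K)) = (((K₁ : ℕ) : K)) ^ 4 := by push_cast; ring
      cases i with
      | succ n =>
        calc v ((K₁ ^ 4 : ℕ) : K) * v ((taylor c f).coeff (n + 1)) * v (y - c) ^ (n + 1)
            = (v ((K₁ : ℕ) : K) ^ 2 * v ((taylor c f).coeff (n + 1)) * v (y - c) ^ (n + 1))
                * v ((K₁ : ℕ) : K) ^ 2 := by
              rw [hcast4, map_pow, show (4 : ℕ) = 2 + 2 from rfl, pow_add]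
              simp only [mul_comm, mul_left_comm, mul_assoc]
          _ ≤ v (f.eval y) * 1 := mul_le_mul' (H2 n hi) (pow_le_one' hvK₁le1 2)
          _ = v (f.eval y) := mul_one _
      | zero =>
        have he : f.eval y = (∑ i ∈ Finset.range (d' + 1),
            (taylor c f).coeff (i + 1) * (y - c) ^ (i + 1))
              + (taylor c f).coeff 0 := by
          conv_lhs => rw [← taylor_eval_sub c f y]
          rw [eval_eq_sum_range, natDegree_taylor, hd, Finset.sum_range_succ']
          simp
        have hsum : (taylor c f).coeff 0 = f.eval y - ∑ i ∈ Finset.range (d' + 1),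
            (taylor c f).coeff (i + 1) * (y - c) ^ (i + 1) := by
          rw [he]; ring
        rw [pow_zero, mul_one, ← map_mul, hsum, mul_sub, Finset.mul_sum]
        refine le_trans (v.map_sub _ _) (max_le ?_ ?_)
        · rw [map_mul]
          calc v ((K₁ ^ 4 : ℕ) : K) * v (f.eval y) ≤ 1 * v (f.eval y) :=
              mul_le_mul' (v_nat_le_one v _) le_rfl
            _ = v (f.eval y) := one_mul _
        · apply v.map_sum_le
          intro i hi2
          rw [map_mul, map_mul, map_pow]
          have hii : i + 1 ≤ d' + 1 := by
            have := Finset.mem_range.mp hi2; omega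
          calc v ((K₁ ^ 4 : ℕ) : K)
                * (v ((taylor c f).coeff (i + 1)) * v (y - c) ^ (i + 1))
              = (v ((K₁ : ℕ) : K) ^ 2 * v ((taylor c f).coeff (i + 1))
                  * v (y - c) ^ (i + 1)) * v ((K₁ : ℕ) : K) ^ 2 := by
                rw [hcast4, map_pow, show (4 : ℕ) = 2 + 2 from rfl, pow_add]
                simp only [mul_comm, mul_left_comm, mul_assoc]
            _ ≤ v (f.eval y) * 1 := mul_le_mul' (H2 i hii) (pow_le_one' hvK₁le1 2)
            _ = v (f.eval y) := mul_one _
    · -- deep cancellation: Hensel's lemma produces a root of f, contradiction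
      exfalso
      rw [not_le] at hcase
      have hF : f.eval y ≠ 0 := hroot y
      have hvF : v (f.eval y) ≠ 0 := by rwa [Valuation.ne_zero_iff]
      have hF' : (derivative f).eval y ≠ 0 := by
        intro h
        rw [h, map_zero, mul_zero, zero_mul] at hcase
        exact not_lt_zero' hcase
      have hvF' : v ((derivative f).eval y) ≠ 0 := by rwa [Valuation.ne_zero_iff]
      have hA0 : v (y - c) ≠ 0 := by
        intro h
        rw [h, mul_zero] at hcase
        exact not_lt_zero' hcase
      set t : K := f.eval y / (derivative f).eval y with htdef
      have ht : t * (derivative f).eval y = f.eval y := div_mul_cancel₀ _ hF'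
      have ht0 : t ≠ 0 := div_ne_zero hF hF'
      have hvt : v t * v ((derivative f).eval y) = v (f.eval y) := by rw [← map_mul, ht]
      have hTlt : v t < v ((K₁ : ℕ) : K) * v (y - c) := by
        have h1 : v ((derivative f).eval y) * v t
            < v ((derivative f).eval y) * (v ((K₁ : ℕ) : K) * v (y - c)) := by
          rw [mul_comm (v ((derivative f).eval y)) (v t), hvt]
          calc v (f.eval y) < v ((K₁ : ℕ) : K) * v ((derivative f).eval y) * v (y - c) := hcase
            _ = v ((derivative f).eval y) * (v ((K₁ : ℕ) : K) * v (y - c)) := by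
              simp only [mul_comm, mul_left_comm, mul_assoc]
        exact lt_of_mul_lt_mul_of_le₀ h1 (zero_lt_iff.mpr hvF') le_rfl
      have htay_y : taylor y f = taylor (y - c) (taylor c f) := by
        rw [taylor_taylor, sub_add_cancel]
      -- strict bound on the higher Taylor coefficients at y
      have hstrict : ∀ j, 2 ≤ j → v ((taylor y f).coeff j * t ^ j) < v (f.eval y) := by
        intro j hj
        rw [htay_y, taylor_coeff_sum, Finset.sum_mul]
        apply v.map_sum_lt hvF
        intro m hm
        rcases lt_or_ge m j with hmj | hjm
        · simp only [Nat.choose_eq_zero_of_lt hmj, Nat.cast_zero, zero_mul, map_zero]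
          exact zero_lt_iff.mpr hvF
        · have hm1 : 1 ≤ m := le_trans (by omega) hjm
          have hmd : m ≤ d' + 1 := by
            have := le_natDegree_of_mem_supp m hm
            rwa [natDegree_taylor, hd] at this
          have hIm := IH' (m - 1) (by omega)
          rw [show m - 1 + 1 = m from by omega] at hIm
          rw [map_mul, map_mul, map_mul, map_pow, map_pow]
          have main : v ((taylor c f).coeff m) * v (y - c) ^ (m - j) * v t ^ j
              < v (f.eval y) := by
            have hXne : v ((K₁ : ℕ) : K) * v (y - c) ^ (j - 1) ≠ 0 :=
              mul_ne_zero hvK₁ne (pow_ne_zero _ hA0)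
            have step : (v ((K₁ : ℕ) : K) * v (y - c) ^ (j - 1))
                * (v ((taylor c f).coeff m) * v (y - c) ^ (m - j) * v t ^ j)
                < (v ((K₁ : ℕ) : K) * v (y - c) ^ (j - 1)) * v (f.eval y) := by
              have e1 : (v ((K₁ : ℕ) : K) * v (y - c) ^ (j - 1))
                  * (v ((taylor c f).coeff m) * v (y - c) ^ (m - j) * v t ^ j)
                  = (v ((K₁ : ℕ) : K) * v ((taylor c f).coeff m) * v (y - c) ^ (m - 1))
                      * v t ^ j := by
                rw [show (m - 1 : ℕ) = (j - 1) + (m - j) from by omega, pow_add]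
                simp only [mul_comm, mul_left_comm, mul_assoc]
              rw [e1]
              calc (v ((K₁ : ℕ) : K) * v ((taylor c f).coeff m) * v (y - c) ^ (m - 1))
                    * v t ^ j
                  ≤ v ((derivative f).eval y) * v t ^ j := mul_le_mul' hIm le_rfl
                _ = (v t * v ((derivative f).eval y)) * v t ^ (j - 1) := by
                    have hTj : v t ^ j = v t * v t ^ (j - 1) := by
                      conv_lhs => rw [show j = (j - 1) + 1 from by omega]
                      rw [pow_succ']
                    rw [hTj]
                    simp only [mul_comm, mul_left_comm, mul_assoc]
                _ = v (f.eval y) * v t ^ (j - 1) := by rw [hvt]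
                _ < v (f.eval y) * (v ((K₁ : ℕ) : K) * v (y - c)) ^ (j - 1) :=
                    mul_lt_mul_of_pos_left
                      (pow_lt_pow_left₀ hTlt zero_le' (by omega)) (zero_lt_iff.mpr hvF)
                _ ≤ v (f.eval y) * (v ((K₁ : ℕ) : K) * v (y - c) ^ (j - 1)) := by
                    refine mul_le_mul' le_rfl ?_
                    rw [mul_pow]
                    refine mul_le_mul' ?_ le_rfl
                    calc v ((K₁ : ℕ) : K) ^ (j - 1)
                        = v ((K₁ : ℕ) : K) ^ (j - 2) * v ((K₁ : ℕ) : K) := by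
                          rw [← pow_succ, show (j - 2) + 1 = j - 1 from by omega]
                      _ ≤ 1 * v ((K₁ : ℕ) : K) :=
                          mul_le_mul' (pow_le_one' hvK₁le1 _) le_rfl
                      _ = v ((K₁ : ℕ) : K) := one_mul _
                _ = (v ((K₁ : ℕ) : K) * v (y - c) ^ (j - 1)) * v (f.eval y) := by
                    simp only [mul_comm, mul_left_comm, mul_assoc]
            exact lt_of_mul_lt_mul_of_le₀ step (zero_lt_iff.mpr hXne) le_rfl
          calc v ((m.choose j : ℕ) : K) * v ((taylor c f).coeff m) * v (y - c) ^ (m - j)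
                * v t ^ j
              ≤ 1 * (v ((taylor c f).coeff m) * v (y - c) ^ (m - j) * v t ^ j) := by
                have : v ((m.choose j : ℕ) : K) * v ((taylor c f).coeff m)
                    * v (y - c) ^ (m - j) * v t ^ j
                    = v ((m.choose j : ℕ) : K)
                      * (v ((taylor c f).coeff m) * v (y - c) ^ (m - j) * v t ^ j) := by
                  simp only [mul_comm, mul_left_comm, mul_assoc]
                rw [this]
                exact mul_le_mul' (v_nat_le_one v _) le_rfl
            _ = v ((taylor c f).coeff m) * v (y - c) ^ (m - j) * v t ^ j := one_mul _
            _ < v (f.eval y) := main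
      -- the normalized coefficients
      set e : ℕ → K := fun j => (taylor y f).coeff j * t ^ j / f.eval y with hedef
      have he0 : e 0 = 1 := by
        rw [hedef]
        simp only [taylor_coeff_zero, pow_zero, mul_one]
        exact div_self hF
      have he1 : e 1 = 1 := by
        rw [hedef]
        simp only [taylor_coeff_one, pow_one, htdef]
        field_simp
      have hestrict : ∀ j, 2 ≤ j → v (e j) < 1 := by
        intro j hj
        rw [hedef]
        simp only [Valuation.map_div]
        rw [div_lt_iff₀ (zero_lt_iff.mpr hvF), one_mul]
        exact hstrict j hj
      have heall : ∀ j, v (e j) ≤ 1 := by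
        intro j
        match j with
        | 0 => rw [he0]; exact le_of_eq (map_one v)
        | 1 => rw [he1]; exact le_of_eq (map_one v)
        | (j + 2) => exact le_of_lt (hestrict (j + 2) (by omega))
      set E : ℕ → v.integer := fun j => ⟨e j, heall j⟩ with hEdef
      -- the Hensel polynomial
      set Q : Polynomial v.integer :=
        ∑ j ∈ Finset.range d', Polynomial.C (E (j + 2)) * X ^ (d' - 1 - j) with hQdef
      set P : Polynomial v.integer := X ^ (d' + 1) + (X ^ d' + Q) with hPdef
      have hQdeg : Q.degree ≤ (d' : WithBot ℕ) := by
        rw [hQdef]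
        refine le_trans (Polynomial.degree_sum_le _ _) ?_
        refine Finset.sup_le fun j _ => ?_
        refine le_trans (degree_C_mul_X_pow_le _ _) ?_
        exact_mod_cast (show d' - 1 - j ≤ d' by omega)
      have hmid : (X ^ d' + Q).degree ≤ (d' : WithBot ℕ) := by
        refine le_trans (degree_add_le _ _) (max_le ?_ hQdeg)
        rw [degree_X_pow]
      have hmonic : P.Monic := by
        rw [hPdef]
        refine monic_X_pow_add (lt_of_le_of_lt hmid ?_)
        exact_mod_cast Nat.lt_succ_self d'
      -- membership in the maximal ideal vs valuation
      have hint : ∀ x : v.integer, x ∈ IsLocalRing.maximalIdeal v.integer ↔ v (x : K) < 1 := by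
        intro x
        rw [IsLocalRing.mem_maximalIdeal, mem_nonunits_iff]
        constructor
        · intro hx
          rcases lt_or_eq_of_le x.2 with h | h
          · exact h
          · exact absurd ((Valuation.integer.integers v).isUnit_of_one' h) hx
        · intro hx hu
          have h1 := (Valuation.integer.integers v).isUnit_iff_valuation_eq_one.mp hu
          exact absurd h1 (ne_of_lt hx)
      -- move the computation to K[X]
      set φ : v.integer →+* K := algebraMap v.integer K with hφdef
      have hφE : ∀ j, φ (E j) = e j := fun j => rfl
      set PK : K[X] := X ^ (d' + 1) + (X ^ d'
        + ∑ j ∈ Finset.range d', Polynomial.C (e (j + 2)) * X ^ (d' - 1 - j)) with hPKdef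
      have hPmap : P.map φ = PK := by
        rw [hPdef, hQdef, hPKdef]
        simp only [Polynomial.map_add, Polynomial.map_pow, Polynomial.map_X,
          Polynomial.map_sum, Polynomial.map_mul, Polynomial.map_C, hφE]
      have hevalP : ∀ r : v.integer, ((P.eval r : v.integer) : K) = PK.eval (r : K) := by
        intro r
        rw [← hPmap, eval_map]
        exact (eval₂_at_apply φ r).symm
      have hevalP' : ∀ r : v.integer,
          (((derivative P).eval r : v.integer) : K) = (derivative PK).eval (r : K) := by
        intro r
        rw [← hPmap, derivative_map, eval_map]
        exact (eval₂_at_apply φ r).symm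
      have hPKeval : ∀ x : K, PK.eval x
          = x ^ (d' + 1) + (x ^ d' + ∑ j ∈ Finset.range d', e (j + 2) * x ^ (d' - 1 - j)) := by
        intro x
        rw [hPKdef]
        simp only [eval_add, eval_pow, eval_X, eval_finset_sum, eval_mul, eval_C]
      -- P(-1) is in the maximal ideal
      have hPm1 : PK.eval (-1 : K)
          = ∑ j ∈ Finset.range d', e (j + 2) * (-1 : K) ^ (d' - 1 - j) := by
        rw [hPKeval, pow_succ]
        ring
      have hmem : P.eval (-1) ∈ IsLocalRing.maximalIdeal v.integer := by
        rw [hint]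
        have hcoe : (((-1 : v.integer) : K)) = (-1 : K) := by push_cast; ring
        rw [hevalP, hcoe, hPm1]
        apply v.map_sum_lt one_ne_zero
        intro j _
        rw [map_mul, map_pow, Valuation.map_neg, map_one, one_pow, mul_one]
        exact hestrict (j + 2) (by omega)
      -- the derivative of P at -1 is a unit
      have hderivPK : derivative PK = C ((d' + 1 : ℕ) : K) * X ^ d'
          + (C ((d' : ℕ) : K) * X ^ (d' - 1)
            + ∑ j ∈ Finset.range d',
                C (e (j + 2) * (((d' - 1 - j : ℕ) : K))) * X ^ (d' - 1 - j - 1)) := by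
        rw [hPKdef, derivative_add, derivative_add, derivative_X_pow, derivative_X_pow,
          derivative_sum, Nat.add_sub_cancel,
          Finset.sum_congr rfl (fun j _ => derivative_C_mul_X_pow (e (j + 2)) (d' - 1 - j))]
      have hdeval : (derivative PK).eval (-1 : K)
          = (((d' : K) + 1) * (-1 : K) ^ d' + (d' : K) * (-1 : K) ^ (d' - 1))
            + ∑ j ∈ Finset.range d',
                e (j + 2) * ((d' - 1 - j : ℕ) : K) * (-1 : K) ^ (d' - 1 - j - 1) := by
        rw [hderivPK]
        simp only [eval_add, eval_mul, eval_pow, eval_X, eval_C, eval_finset_sum]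
        push_cast
        ring
      have hw : ((d' : K) + 1) * (-1 : K) ^ d' + (d' : K) * (-1 : K) ^ (d' - 1)
          = (-1 : K) ^ d' := by
        cases d' with
        | zero => simp
        | succ m =>
          push_cast
          ring
      have hunit : IsUnit ((derivative P).eval (-1)) := by
        apply (Valuation.integer.integers v).isUnit_of_one'
        show v ((((derivative P).eval (-1) : v.integer)) : K) = 1
        have hcoe : (((-1 : v.integer) : K)) = (-1 : K) := by push_cast; ring
        rw [hevalP', hcoe, hdeval, hw]
        have hvsum : v (∑ j ∈ Finset.range d',
            e (j + 2) * ((d' - 1 - j : ℕ) : K) * (-1 : K) ^ (d' - 1 - j - 1))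
            < v ((-1 : K) ^ d') := by
          rw [map_pow, Valuation.map_neg, map_one, one_pow]
          apply v.map_sum_lt one_ne_zero
          intro j _
          rw [map_mul, map_mul, map_pow, Valuation.map_neg, map_one, one_pow, mul_one]
          calc v (e (j + 2)) * v ((( d' - 1 - j : ℕ) : K))
              ≤ v (e (j + 2)) * 1 := mul_le_mul' le_rfl (v_nat_le_one v _)
            _ = v (e (j + 2)) := mul_one _
            _ < 1 := hestrict (j + 2) (by omega)
        rw [Valuation.map_add_eq_of_lt_left _ hvsum, map_pow, Valuation.map_neg, map_one,
          one_pow]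
      -- apply Hensel's lemma
      obtain ⟨a, haroot, hamem⟩ := hhens.is_henselian P hmonic (-1) hmem hunit
      have hva1 : v ((a : K) + 1) < 1 := by
        have := (hint (a - (-1))).mp hamem
        have hcast : ((a - (-1) : v.integer) : K) = (a : K) + 1 := by push_cast; ring
        rwa [hcast] at this
      have hva : v (a : K) = 1 := by
        have h1 : (a : K) = ((a : K) + 1) + (-1 : K) := by ring
        rw [h1, Valuation.map_add_eq_of_lt_right _ (by
          rw [Valuation.map_neg, map_one]; exact hva1), Valuation.map_neg, map_one]
      have hu : (a : K) ≠ 0 := by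
        intro h
        rw [h, map_zero] at hva
        exact zero_ne_one hva
      -- the root of f
      have hPu : ((a : K)) ^ (d' + 1) + ((a : K) ^ d'
          + ∑ j ∈ Finset.range d', e (j + 2) * (a : K) ^ (d' - 1 - j)) = 0 := by
        rw [← hPKeval, ← hevalP a, haroot]
        exact_mod_cast rfl
      set u : K := (a : K) with hudef
      have hsum1 : u ^ (d' + 1) + (u ^ d'
          + ∑ j ∈ Finset.range d', e (j + 2) * u ^ (d' - 1 - j))
          = ∑ i ∈ Finset.range (d' + 2), e i * u ^ (d' + 1 - i) := by
        rw [Finset.sum_range_succ' (fun i => e i * u ^ (d' + 1 - i)) (d' + 1),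
          Finset.sum_range_succ' (fun i => e (i + 1) * u ^ (d' + 1 - (i + 1))) d']
        simp only [he0, he1, one_mul]
        have h1 : d' + 1 - 0 = d' + 1 := rfl
        have h2 : d' + 1 - (0 + 1) = d' := rfl
        rw [h1, h2]
        have h3 : ∀ j, d' + 1 - (j + 1 + 1) = d' - 1 - j := fun j => by omega
        have h4 : (∑ j ∈ Finset.range d', e (j + 1 + 1) * u ^ (d' + 1 - (j + 1 + 1)))
            = ∑ j ∈ Finset.range d', e (j + 2) * u ^ (d' - 1 - j) := by
          refine Finset.sum_congr rfl fun j _ => ?_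
          rw [h3 j]
        rw [h4]
        ring
      have hzero : ∑ i ∈ Finset.range (d' + 2), e i * u ^ (d' + 1 - i) = 0 := by
        rw [← hsum1]
        exact hPu
      set w0 : K := y + t * u⁻¹ with hw0def
      have hfw0 : f.eval w0 = 0 := by
        have h1 : f.eval w0 = (taylor y f).eval (w0 - y) := (taylor_eval_sub y f w0).symm
        have h2 : w0 - y = t * u⁻¹ := by rw [hw0def]; ring
        rw [h1, h2, eval_eq_sum_range, natDegree_taylor, hd]
        have h5 : ∀ i ∈ Finset.range (d' + 1 + 1),
            (taylor y f).coeff i * (t * u⁻¹) ^ i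
              = f.eval y * (u⁻¹) ^ (d' + 1) * (e i * u ^ (d' + 1 - i)) := by
          intro i hi
          have hi' : i ≤ d' + 1 := by
            have := Finset.mem_range.mp hi; omega
          have heF : e i * f.eval y = (taylor y f).coeff i * t ^ i := by
            rw [hedef]
            field_simp
          have hupow : u ^ (d' + 1 - i) = u ^ (d' + 1) * (u ^ i)⁻¹ :=
            pow_sub₀ u hu hi'
          calc (taylor y f).coeff i * (t * u⁻¹) ^ i
              = ((taylor y f).coeff i * t ^ i) * (u ^ i)⁻¹ := by
                rw [mul_pow, inv_pow]; ring
            _ = (e i * f.eval y) * (u ^ i)⁻¹ := by rw [heF]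
            _ = f.eval y * (u⁻¹) ^ (d' + 1) * (e i * u ^ (d' + 1 - i)) := by
                rw [hupow, inv_pow]
                field_simp
        rw [Finset.sum_congr rfl h5, ← Finset.mul_sum, hzero, mul_zero]
      exact hroot w0 hfw0



end Helpers

/-- Valuation-theoretic core of the paper's one-variable cell decomposition lemma
(Lemma 7.17 `lcd`): for a polynomial `f` of degree `d` over a Henselian valued field of
characteristic zero, there are a positive integer `k` and finitely many centers `C ⊆ K`
such that every `y ∈ K` admits a center `c ∈ C` with, in the Taylor expansion
`f(Y) = Σ b_{i,c} (Y - c)ⁱ`, `ord f(y) ≤ min_i ord (k · b_{i,c} · (y - c)ⁱ)`, i.e.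
`v k * v b_{i,c} * v (y - c) ^ i ≤ v (f y)` for all `i ≤ d`. -/
theorem cell_decomposition_polynomial_centers
    {K : Type*} [Field K] [CharZero K]
    {Γ₀ : Type*} [LinearOrderedCommGroupWithZero Γ₀]
    (v : Valuation K Γ₀) (hhens : HenselianLocalRing v.integer)
    (f : K[X]) (d : ℕ) (hd : f.natDegree = d) :
    ∃ k : ℕ, 0 < k ∧ ∃ C : Finset K, ∀ y : K, ∃ c ∈ C,
      ∀ i ≤ d, v (k : K) * v ((Polynomial.taylor c f).coeff i) * v (y - c) ^ i
        ≤ v (f.eval y) := by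
  exact cell_aux v hhens d f hd
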